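/- If D is a nonprincipal ultrafilter and κ is the least infinite cardinal such that D is (κ,κ)-regular, then κ is a regular cardinal and D is κ-complete. -/

import Mathlib

open Cardinal

/-- `X` is `[μ,λ]`-compact: every open cover by at most `lam` sets
has a subcover by fewer than `μ` sets. -/
def CptIn (μ lam : Cardinal) (X : Type) [TopologicalSpace X] : Prop :=
  ∀ 𝒰 : Set (Set X), (∀ U ∈ 𝒰, IsOpen U) → #𝒰 ≤ lam → ⋃₀ 𝒰 = Set.univ →
    ∃ 𝒱 ⊆ 𝒰, #𝒱 < μ ∧ ⋃₀ 𝒱 = Set.univ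

/-- `p` is a `D`-limit point of the sequence `x`. -/
def IsDLimit {I X : Type} [TopologicalSpace X] (D : Ultrafilter I) (x : I → X) (p : X) : Prop :=
  ∀ U : Set X, IsOpen U → p ∈ U → {i | x i ∈ U} ∈ D

/-- `X` is `D`-compact. -/
def DCompact {I : Type} (D : Ultrafilter I) (X : Type) [TopologicalSpace X] : Prop :=
  ∀ x : I → X, ∃ p : X, IsDLimit D x p

/-- `D` is `μ`-complete. -/
def MuComplete {I : Type} (μ : Cardinal) (D : Ultrafilter I) : Prop :=
  ∀ S : Set (Set I), #S < μ → (∀ A ∈ S, A ∈ D) → ⋂₀ S ∈ D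

/-- `D` is `(μ,lam)`-regular: there is a family of `lam`-many members of `D`
every intersection of `μ`-many of which is empty. -/
def RegUF {I : Type} (μ lam : Cardinal) (D : Ultrafilter I) : Prop :=
  ∃ (A : Type) (Z : A → Set I), #A = lam ∧ (∀ a, Z a ∈ D) ∧
    ∀ S : Set A, #S = μ → ⋂ a ∈ S, Z a = ∅

/-- The ordinal space of a cardinal, with the order topology. -/
noncomputable def ordSpace (c : Cardinal) : Type := c.ord.ToType

noncomputable instance (c : Cardinal) : LinearOrder (ordSpace c) :=
  inferInstanceAs (LinearOrder c.ord.ToType)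
noncomputable instance (c : Cardinal) : TopologicalSpace (ordSpace c) := Preorder.topology _
instance (c : Cardinal) : OrderTopology (ordSpace c) := ⟨rfl⟩

lemma mk_Iic_lt {c : Cardinal} (hc : ℵ₀ ≤ c) (i : c.ord.ToType) : #(Set.Iic i) < c := by
  rw [← Set.Iio_insert]
  exact Cardinal.mk_insert_le.trans_lt
    (Cardinal.add_lt_of_lt hc (Cardinal.mk_Iio_ord_toType i)
      (Cardinal.one_lt_aleph0.trans_le hc))

lemma exists_ge_of_mk_eq {c : Cardinal} {S : Set c.ord.ToType} (hS : #S = c)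
    (i : c.ord.ToType) : ∃ j ∈ S, i ≤ j := by
  by_contra h
  push_neg at h
  have hsub : S ⊆ Set.Iio i := fun j hj => (h j hj)
  have := (Cardinal.mk_le_mk_of_subset hsub).trans_lt (Cardinal.mk_Iio_ord_toType i)
  rw [hS] at this
  exact lt_irrefl _ this

lemma buildReg {I : Type} (D : Ultrafilter I) (μ : Cardinal)
    (W : μ.ord.ToType → Set I) (hWD : ∀ i, W i ∈ D)
    (hmono : ∀ i j, i ≤ j → W j ⊆ W i)
    (hempty : ∀ x : I, ¬ ∀ i, x ∈ W i) : RegUF μ μ D := by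
  refine ⟨μ.ord.ToType, W, by rw [Cardinal.mk_toType, Cardinal.card_ord], hWD, ?_⟩
  intro S hS
  ext x
  simp only [Set.mem_iInter, Set.mem_empty_iff_false, iff_false]
  intro hx
  apply hempty x
  intro i
  obtain ⟨j, hjS, hij⟩ := exists_ge_of_mk_eq hS i
  exact hmono i j hij (hx j hjS)

lemma complete_of_least {I : Type} (D : Ultrafilter I) (κ : Cardinal)
    (hκ : ℵ₀ ≤ κ)
    (hleast : ∀ κ' : Cardinal, ℵ₀ ≤ κ' → κ' < κ → ¬RegUF κ' κ' D) :
    MuComplete κ D := by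
  by_contra hc
  simp only [MuComplete, not_forall] at hc
  obtain ⟨S₀, h1, h2, h3⟩ := hc
  set P : Set Cardinal := {c | ∃ S : Set (Set I), #S = c ∧ (∀ A ∈ S, A ∈ D) ∧ ⋂₀ S ∉ D} with hP
  have hP0 : (#S₀ : Cardinal) ∈ P := ⟨S₀, rfl, h2, h3⟩
  obtain ⟨μ, hPμ, hmin⟩ := Cardinal.lt_wf.has_min P ⟨_, hP0⟩
  obtain ⟨S, hScard, hSD, hSInt⟩ := hPμ
  -- μ is infinite
  have hμω : ℵ₀ ≤ μ := by
    by_contra hfin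
    push_neg at hfin
    rw [← hScard, Cardinal.lt_aleph0_iff_set_finite] at hfin
    exact hSInt ((Filter.sInter_mem hfin).2 hSD)
  -- μ < κ
  have hμκ : μ < κ := by
    have := hmin _ hP0
    push_neg at this
    exact this.trans_lt h1
  -- smaller families intersect
  have hsmall : ∀ T : Set (Set I), #T < μ → (∀ A ∈ T, A ∈ D) → ⋂₀ T ∈ D := by
    intro T hT hTD
    by_contra hTI
    exact hmin _ ⟨T, rfl, hTD, hTI⟩ hT
  -- enumerate S
  have hmk : #(μ.ord.ToType) = #S := by
    rw [Cardinal.mk_toType, Cardinal.card_ord, hScard]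
  obtain ⟨f⟩ := Cardinal.eq.mp hmk
  set W : μ.ord.ToType → Set I :=
    fun i => (⋂ j ∈ Set.Iic i, ((f j : Set I))) ∩ (⋂₀ S)ᶜ with hW
  have hWD : ∀ i, W i ∈ D := by
    intro i
    apply Filter.inter_mem
    · have : (⋂ j ∈ Set.Iic i, ((f j : Set I)))
          = ⋂₀ ((fun j => ((f j : Set I))) '' Set.Iic i) := by
        rw [Set.sInter_image]
      rw [this]
      apply hsmall
      · exact Cardinal.mk_image_le.trans_lt (mk_Iic_lt hμω i)
      · rintro A ⟨j, _, rfl⟩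
        exact hSD _ (f j).2
    · exact (Ultrafilter.compl_mem_iff_notMem).2 hSInt
  have hmono : ∀ i j, i ≤ j → W j ⊆ W i := by
    intro i j hij x hx
    refine ⟨?_, hx.2⟩
    have := hx.1
    simp only [Set.mem_iInter] at this ⊢
    exact fun k hk => this k (hk.trans hij)
  have hempty : ∀ x : I, ¬ ∀ i, x ∈ W i := by
    intro x hx
    have hxS : x ∈ ⋂₀ S := by
      intro A hA
      have := (hx (f.symm ⟨A, hA⟩)).1
      simp only [Set.mem_iInter] at this
      have := this (f.symm ⟨A, hA⟩) (Set.mem_Iic.2 le_rfl)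
      rwa [Equiv.apply_symm_apply] at this
    haveI : Nonempty S := by
      rw [← Cardinal.mk_ne_zero_iff, hScard]
      exact (Cardinal.aleph0_pos.trans_le hμω).ne'
    exact (hx (f.symm (Classical.arbitrary _))).2 hxS
  exact hleast μ hμω hμκ (buildReg D μ W hWD hmono hempty)

theorem stmt3' {I : Type} (D : Ultrafilter I) (κ : Cardinal)
    (hκ : ℵ₀ ≤ κ) (hreg : RegUF κ κ D)
    (hleast : ∀ κ' : Cardinal, ℵ₀ ≤ κ' → κ' < κ → ¬RegUF κ' κ' D) :
    κ.IsRegular ∧ MuComplete κ D := by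
  have hcomp : MuComplete κ D := complete_of_least D κ hκ hleast
  refine ⟨⟨hκ, ?_⟩, hcomp⟩
  by_contra hcof
  push_neg at hcof
  set lam : Cardinal := κ.ord.cof with hlam
  have hlamω : ℵ₀ ≤ lam := Ordinal.aleph0_le_cof.2 (Cardinal.isSuccLimit_ord hκ)
  -- unbounded subset of κ.ord.ToType of size lam
  obtain ⟨T, hTunb, hTcard⟩ := Ordinal.cof_eq κ.ord.ToType
  rw [Ordinal.cof_toType] at hTcard
  -- transport the regular family to κ.ord.ToType
  obtain ⟨A, Z, hA, hZD, hZ⟩ := hreg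
  have hmkA : #(κ.ord.ToType) = #A := by rw [Cardinal.mk_toType, Cardinal.card_ord, hA]
  obtain ⟨q⟩ := Cardinal.eq.mp hmkA
  set Z' : κ.ord.ToType → Set I := fun i => Z (q i) with hZ'def
  have hZ' : ∀ x : I, ¬ ∀ j, x ∈ Z' j := by
    intro x hx
    have huniv : #((Set.univ : Set A)) = κ := by rw [Cardinal.mk_univ, hA]
    have := hZ Set.univ huniv
    have hxin : x ∈ ⋂ a ∈ (Set.univ : Set A), Z a := by
      simp only [Set.mem_iInter]
      intro a _
      have := hx (q.symm a)
      simpa [hZ'def] using this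
    rw [this] at hxin
    exact hxin
  -- enumerate T by lam
  have hmkT : #(lam.ord.ToType) = #T := by rw [Cardinal.mk_toType, Cardinal.card_ord, hTcard]
  obtain ⟨e⟩ := Cardinal.eq.mp hmkT
  set g : lam.ord.ToType → κ.ord.ToType := fun ξ => (e ξ : κ.ord.ToType) with hg
  have hgub : ∀ a : κ.ord.ToType, ∃ ξ, a ≤ g ξ := by
    intro a
    obtain ⟨b, hbT, hba⟩ := hTunb a
    exact ⟨e.symm ⟨b, hbT⟩, by rw [hg]; simp [Equiv.apply_symm_apply]; exact hba⟩
  set B : lam.ord.ToType → Set (κ.ord.ToType) :=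
    fun ξ => ⋃ η ∈ Set.Iic ξ, Set.Iic (g η) with hB
  have hBcard : ∀ ξ, #(B ξ) < κ := by
    intro ξ
    refine (Cardinal.mk_biUnion_le _ _).trans_lt ?_
    apply Cardinal.mul_lt_of_lt hκ
    · exact (mk_Iic_lt hlamω ξ).trans_le (hcof.le)
    · apply Ordinal.iSup_lt
      · exact (mk_Iic_lt hlamω ξ).trans_le (le_of_eq hlam)
      · intro η
        exact mk_Iic_lt hκ _
  set W : lam.ord.ToType → Set I := fun ξ => ⋂ j ∈ B ξ, Z' j with hWdef
  have hWD : ∀ ξ, W ξ ∈ D := by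
    intro ξ
    have : W ξ = ⋂₀ (Z' '' B ξ) := by rw [hWdef, Set.sInter_image]
    rw [this]
    apply hcomp
    · exact Cardinal.mk_image_le.trans_lt (hBcard ξ)
    · rintro A' ⟨j, _, rfl⟩
      exact hZD _
  have hmono : ∀ ξ ξ', ξ ≤ ξ' → W ξ' ⊆ W ξ := by
    intro ξ ξ' hle x hx
    simp only [hWdef, Set.mem_iInter] at hx ⊢
    intro j hj
    apply hx
    simp only [hB, Set.mem_iUnion] at hj ⊢
    obtain ⟨η, hη, hjη⟩ := hj
    exact ⟨η, hη.trans hle, hjη⟩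
  have hempty : ∀ x : I, ¬ ∀ ξ, x ∈ W ξ := by
    intro x hx
    apply hZ' x
    intro j
    obtain ⟨ξ, hξ⟩ := hgub j
    have := hx ξ
    simp only [hWdef, Set.mem_iInter] at this
    apply this
    simp only [hB, Set.mem_iUnion]
    exact ⟨ξ, Set.mem_Iic.2 le_rfl, hξ⟩
  exact hleast lam hlamω hcof (buildReg D lam W hWD hmono hempty)

theorem stmt3 {I : Type} (D : Ultrafilter I) (κ : Cardinal)
    (hnp : ¬∃ i : I, D = (pure i : Ultrafilter I))
    (hκ : ℵ₀ ≤ κ) (hreg : RegUF κ κ D)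
    (hleast : ∀ κ' : Cardinal, ℵ₀ ≤ κ' → κ' < κ → ¬RegUF κ' κ' D) :
    κ.IsRegular ∧ MuComplete κ D :=
  stmt3' D κ hκ hreg hleast
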